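/- Let G(x) = 2x(x - 2 + xe^{-x} + 2e^{-x})/(x - 1 + e^{-x})² for x > 0. Then lim_{x→0⁺} G(x) = 4/3 and lim_{x→∞} G(x) = 2. -/

import Mathlib

open Real Set Filter Topology

set_option maxHeartbeats 1000000

private lemma hder_exp_neg (x : ℝ) :
    HasDerivAt (fun x : ℝ => Real.exp (-x)) (-Real.exp (-x)) x := by
  simpa using (hasDerivAt_neg x).exp

private lemma cont_exp_neg : Continuous (fun x : ℝ => Real.exp (-x)) :=
  Real.continuous_exp.comp continuous_neg

private lemma tendsto_exp_neg_zero :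
    Tendsto (fun x : ℝ => Real.exp (-x)) (𝓝[>] (0:ℝ)) (𝓝 1) := by
  have := cont_exp_neg.continuousAt (x := (0:ℝ))
  simpa using this.continuousWithinAt.tendsto

private lemma hD : Tendsto (fun x : ℝ => (x - 1 + Real.exp (-x)) / x ^ 2)
    (𝓝[>] (0:ℝ)) (𝓝 (1/2)) := by
  have hstep2 : Tendsto (fun x : ℝ => (1 - Real.exp (-x)) / (2 * x)) (𝓝[>] (0:ℝ)) (𝓝 (1/2)) := by
    apply HasDerivAt.lhopital_zero_nhdsGT
      (f' := fun x : ℝ => Real.exp (-x)) (g' := fun _ : ℝ => (2:ℝ))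
    · filter_upwards with x
      exact ((hasDerivAt_const x (1:ℝ)).sub (hder_exp_neg x)).congr_deriv (by ring)
    · filter_upwards with x
      simpa using (hasDerivAt_id x).const_mul (2:ℝ)
    · filter_upwards with x using two_ne_zero
    · have : Tendsto (fun x : ℝ => 1 - Real.exp (-x)) (𝓝[>] (0:ℝ)) (𝓝 (1 - 1)) :=
        tendsto_const_nhds.sub tendsto_exp_neg_zero
      simpa using this
    · have : Tendsto (fun x : ℝ => 2 * x) (𝓝 (0:ℝ)) (𝓝 (2 * 0)) :=
        (continuous_const.mul continuous_id).tendsto 0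
      simpa using this.mono_left nhdsWithin_le_nhds
    · have : Tendsto (fun x : ℝ => Real.exp (-x) / 2) (𝓝[>] (0:ℝ)) (𝓝 (1 / 2)) :=
        tendsto_exp_neg_zero.div_const 2
      exact this
  apply HasDerivAt.lhopital_zero_nhdsGT
    (f' := fun x : ℝ => 1 - Real.exp (-x)) (g' := fun x : ℝ => 2 * x)
  · filter_upwards with x
    exact (((hasDerivAt_id x).sub (hasDerivAt_const x (1:ℝ))).add (hder_exp_neg x)).congr_deriv (by ring)
  · filter_upwards with x
    simpa [mul_comm] using (hasDerivAt_pow 2 x)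
  · filter_upwards [self_mem_nhdsWithin] with x (hx : 0 < x)
    positivity
  · have : Tendsto (fun x : ℝ => x - 1 + Real.exp (-x)) (𝓝 (0:ℝ)) (𝓝 (0 - 1 + Real.exp (-0))) :=
      ((continuous_id'.sub continuous_const).add cont_exp_neg).tendsto 0
    simpa using this.mono_left nhdsWithin_le_nhds
  · have : Tendsto (fun x : ℝ => x ^ 2) (𝓝 (0:ℝ)) (𝓝 (0 ^ 2)) := (continuous_pow 2).tendsto 0
    simpa using this.mono_left nhdsWithin_le_nhds
  · exact hstep2

private lemma hN : Tendsto
    (fun x : ℝ => (x - 2 + x * Real.exp (-x) + 2 * Real.exp (-x)) / x ^ 3)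
    (𝓝[>] (0:ℝ)) (𝓝 (1/6)) := by
  have hstep2 : Tendsto (fun x : ℝ => (x * Real.exp (-x)) / (6 * x)) (𝓝[>] (0:ℝ))
      (𝓝 (1/6)) := by
    have heq : ∀ᶠ x in 𝓝[>] (0:ℝ),
        Real.exp (-x) / 6 = (x * Real.exp (-x)) / (6 * x) := by
      filter_upwards [self_mem_nhdsWithin] with x (hx : 0 < x)
      field_simp
    have : Tendsto (fun x : ℝ => Real.exp (-x) / 6) (𝓝[>] (0:ℝ)) (𝓝 (1/6)) :=
      tendsto_exp_neg_zero.div_const 6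
    exact this.congr' heq
  have hstep1 : Tendsto (fun x : ℝ => (1 - Real.exp (-x) - x * Real.exp (-x)) / (3 * x ^ 2))
      (𝓝[>] (0:ℝ)) (𝓝 (1/6)) := by
    apply HasDerivAt.lhopital_zero_nhdsGT
      (f' := fun x : ℝ => x * Real.exp (-x)) (g' := fun x : ℝ => 6 * x)
    · filter_upwards with x
      have h1 : HasDerivAt (fun x : ℝ => x * Real.exp (-x))
          (Real.exp (-x) - x * Real.exp (-x)) x := by
        have := (hasDerivAt_id x).mul (hder_exp_neg x)
        exact this.congr_deriv (by simp only [id_eq, one_mul]; ring)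
      have := ((hasDerivAt_const x (1:ℝ)).sub (hder_exp_neg x)).sub h1
      exact this.congr_deriv (by ring)
    · filter_upwards with x
      have := (hasDerivAt_pow 2 x).const_mul (3:ℝ)
      exact this.congr_deriv (by norm_num; ring)
    · filter_upwards [self_mem_nhdsWithin] with x (hx : 0 < x)
      positivity
    · have : Tendsto (fun x : ℝ => 1 - Real.exp (-x) - x * Real.exp (-x)) (𝓝 (0:ℝ))
          (𝓝 (1 - Real.exp (-0) - 0 * Real.exp (-0))) :=
        ((continuous_const.sub cont_exp_neg).sub (continuous_id'.mul cont_exp_neg)).tendsto 0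
      simpa using this.mono_left nhdsWithin_le_nhds
    · have : Tendsto (fun x : ℝ => 3 * x ^ 2) (𝓝 (0:ℝ)) (𝓝 (3 * 0 ^ 2)) :=
        (continuous_const.mul (continuous_pow 2)).tendsto 0
      simpa using this.mono_left nhdsWithin_le_nhds
    · exact hstep2
  apply HasDerivAt.lhopital_zero_nhdsGT
    (f' := fun x : ℝ => 1 - Real.exp (-x) - x * Real.exp (-x)) (g' := fun x : ℝ => 3 * x ^ 2)
  · filter_upwards with x
    have h1 : HasDerivAt (fun x : ℝ => x * Real.exp (-x))
        (Real.exp (-x) - x * Real.exp (-x)) x := by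
      have := (hasDerivAt_id x).mul (hder_exp_neg x)
      exact this.congr_deriv (by simp only [id_eq, one_mul]; ring)
    have := (((hasDerivAt_id x).sub (hasDerivAt_const x (2:ℝ))).add h1).add
      ((hder_exp_neg x).const_mul 2)
    exact this.congr_deriv (by ring)
  · filter_upwards with x
    have := hasDerivAt_pow 3 x
    exact this.congr_deriv (by norm_num)
  · filter_upwards [self_mem_nhdsWithin] with x (hx : 0 < x)
    positivity
  · have : Tendsto (fun x : ℝ => x - 2 + x * Real.exp (-x) + 2 * Real.exp (-x)) (𝓝 (0:ℝ))
        (𝓝 (0 - 2 + 0 * Real.exp (-0) + 2 * Real.exp (-0))) :=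
      (((continuous_id'.sub continuous_const).add (continuous_id'.mul cont_exp_neg)).add
        (continuous_const.mul cont_exp_neg)).tendsto 0
    simpa using this.mono_left nhdsWithin_le_nhds
  · have : Tendsto (fun x : ℝ => x ^ 3) (𝓝 (0:ℝ)) (𝓝 (0 ^ 3)) := (continuous_pow 3).tendsto 0
    simpa using this.mono_left nhdsWithin_le_nhds
  · exact hstep1

theorem G_limits :
    Filter.Tendsto
      (fun x : ℝ =>
        2 * x * (x - 2 + x * Real.exp (-x) + 2 * Real.exp (-x)) / (x - 1 + Real.exp (-x)) ^ 2)
      (nhdsWithin 0 (Set.Ioi 0)) (nhds (4 / 3)) ∧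
    Filter.Tendsto
      (fun x : ℝ =>
        2 * x * (x - 2 + x * Real.exp (-x) + 2 * Real.exp (-x)) / (x - 1 + Real.exp (-x)) ^ 2)
      atTop (nhds 2) := by
  constructor
  · have key : Tendsto
        (fun x : ℝ => 2 * ((x - 2 + x * Real.exp (-x) + 2 * Real.exp (-x)) / x ^ 3) /
          ((x - 1 + Real.exp (-x)) / x ^ 2) ^ 2)
        (𝓝[>] (0:ℝ)) (𝓝 (2 * (1/6) / (1/2) ^ 2)) := by
      exact (tendsto_const_nhds.mul hN).div (hD.pow 2) (by norm_num)
    have : (2 * (1/6) / (1/2) ^ 2 : ℝ) = 4 / 3 := by norm_num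
    rw [this] at key
    refine key.congr' ?_
    filter_upwards [self_mem_nhdsWithin] with x (hx : 0 < x)
    have hx' : x ≠ 0 := ne_of_gt hx
    have hD0 : x - 1 + Real.exp (-x) ≠ 0 := by
      have h := Real.add_one_lt_exp (x := -x) (by simpa using hx')
      have : 0 < x - 1 + Real.exp (-x) := by linarith
      exact ne_of_gt this
    field_simp
  · have hinv : Tendsto (fun x : ℝ => x⁻¹) atTop (𝓝 0) := tendsto_inv_atTop_zero
    have hexp : Tendsto (fun x : ℝ => Real.exp (-x)) atTop (𝓝 0) :=
      Real.tendsto_exp_neg_atTop_nhds_zero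
    have hmix : Tendsto (fun x : ℝ => Real.exp (-x) * x⁻¹) atTop (𝓝 0) := by
      simpa using hexp.mul hinv
    have hnum : Tendsto (fun x : ℝ => 2 * (1 - 2 * x⁻¹ + Real.exp (-x) + 2 * (Real.exp (-x) * x⁻¹)))
        atTop (𝓝 (2 * (1 - 2 * 0 + 0 + 2 * 0))) :=
      tendsto_const_nhds.mul (((tendsto_const_nhds.sub (tendsto_const_nhds.mul hinv)).add
        hexp).add (tendsto_const_nhds.mul hmix))
    have hden : Tendsto (fun x : ℝ => (1 - x⁻¹ + Real.exp (-x) * x⁻¹) ^ 2) atTop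
        (𝓝 ((1 - 0 + 0) ^ 2)) :=
      ((tendsto_const_nhds.sub hinv).add hmix).pow 2
    have key := hnum.div hden (by norm_num)
    have hval : (2 * (1 - 2 * 0 + 0 + 2 * 0) / (1 - 0 + 0) ^ 2 : ℝ) = 2 := by norm_num
    rw [hval] at key
    refine key.congr' ?_
    filter_upwards [eventually_gt_atTop (0:ℝ)] with x hx
    have hx' : x ≠ 0 := ne_of_gt hx
    have hD0 : x - 1 + Real.exp (-x) ≠ 0 := by
      have h := Real.add_one_lt_exp (x := -x) (by simpa using hx')
      have : 0 < x - 1 + Real.exp (-x) := by linarith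
      exact ne_of_gt this
    simp only [Pi.div_apply]
    field_simp
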